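/- If G is a connected cubic (3-regular) graph of order n ≥ 28 and the domination number of G satisfies γ(G) ≤ ⌊(5/14)n⌋, then there exists a set S of at most n/3 vertices with |N[S]| ≥ (13/14)n. -/

import Mathlib

variable {V : Type*} [Fintype V]

/-- Closed neighborhood of a set of vertices. -/
def closedN (G : SimpleGraph V) (S : Set V) : Set V := {v | v ∈ S ∨ ∃ u ∈ S, G.Adj u v}

/-- Domination number: minimum cardinality of a dominating set. -/
noncomputable def domNum (G : SimpleGraph V) : ℕ :=
  sInf {k | ∃ S : Set V, S.ncard = k ∧ closedN G S = Set.univ}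

/-- Arithmetic core of the proof. -/
lemma pd_arith (n m k q L R : ℕ) (h28 : 28 ≤ n) (hm : m = n / 3)
    (hD : 14 * (k + m) ≤ 5 * n) (hLR : L + R = n) (hr : m * q ≤ R)
    (hL : L ≤ k * q) : 14 * L ≤ n := by
  rcases le_or_gt 3 q with h3 | h3
  · have h1 : m * 3 ≤ m * q := Nat.mul_le_mul_left m h3
    omega
  · have h2 : k * q ≤ k * 2 := Nat.mul_le_mul_left k (by omega)
    omega

/-- Every subset of a finset has a "bottom" selection of any given size:
a subfinset each of whose `c`-values is at most each value outside it. -/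
lemma exists_bottom (F : Finset V) (c : V → ℕ) (k : ℕ) (hk : k ≤ F.card) :
    ∃ T ⊆ F, T.card = k ∧ ∀ v ∈ T, ∀ w ∈ F, w ∉ T → c v ≤ c w := by
  classical
  have hne : (F.powersetCard k).Nonempty := (Finset.powersetCard_nonempty).2 hk
  obtain ⟨T, hT, hmin⟩ :=
    Finset.exists_min_image (F.powersetCard k) (fun T => ∑ v ∈ T, c v) hne
  rw [Finset.mem_powersetCard] at hT
  refine ⟨T, hT.1, hT.2, ?_⟩
  intro v hv w hwF hwT
  have hvw : w ∉ T.erase v := fun h => hwT (Finset.mem_of_mem_erase h)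
  set T' := insert w (T.erase v) with hT'
  have hT'card : T'.card = k := by
    rw [hT', Finset.card_insert_of_notMem hvw, Finset.card_erase_of_mem hv, hT.2]
    have : 1 ≤ T.card := Finset.card_pos.2 ⟨v, hv⟩
    omega
  have hT'sub : T' ⊆ F := by
    intro x hx
    rw [hT', Finset.mem_insert] at hx
    rcases hx with rfl | hx
    · exact hwF
    · exact hT.1 (Finset.mem_of_mem_erase hx)
  have hT'mem : T' ∈ F.powersetCard k := Finset.mem_powersetCard.2 ⟨hT'sub, hT'card⟩
  have hle := hmin T' hT'mem
  have hsum1 : ∑ x ∈ T', c x = c w + ∑ x ∈ T.erase v, c x := by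
    rw [hT', Finset.sum_insert hvw]
  have hsum2 : ∑ x ∈ T.erase v, c x + c v = ∑ x ∈ T, c x :=
    Finset.sum_erase_add T c hv
  omega

/-- If `G` is a connected cubic graph of order `n ≥ 28` with `γ(G) ≤ ⌊5n/14⌋`, then some set
of at most `n/3` vertices dominates at least `(13/14)n` vertices. -/
theorem pd_thirteen_fourteenths (G : SimpleGraph V) (n : ℕ) (hn : Fintype.card V = n)
    (h28 : 28 ≤ n) (hconn : G.Connected) (hcub : ∀ v : V, (G.neighborSet v).ncard = 3)
    (hdom : domNum G ≤ 5 * n / 14) :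
    ∃ S : Set V, (S.ncard : ℚ) ≤ n / 3 ∧ (13 : ℚ) / 14 * n ≤ (closedN G S).ncard := by
  classical
  -- A minimum dominating set exists.
  have hmemset : domNum G ∈ {k | ∃ S : Set V, S.ncard = k ∧ closedN G S = Set.univ} := by
    apply Nat.sInf_mem
    refine ⟨n, Set.univ, ?_, ?_⟩
    · rw [Set.ncard_univ, Nat.card_eq_fintype_card, hn]
    · ext v; simp [closedN]
  obtain ⟨Dset, hDcard, hDdom⟩ := hmemset
  -- Pass to a finset.
  set F : Finset V := Dset.toFinite.toFinset with hFdef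
  have hFcoe : (F : Set V) = Dset := Dset.toFinite.coe_toFinset
  have hFcard : F.card = domNum G := by
    rw [← hDcard, Set.ncard_eq_toFinset_card']
    congr 1
    apply Finset.coe_injective
    rw [hFcoe, Set.coe_toFinset]
  -- A dominator function.
  have hdomfun : ∀ u : V, ∃ w, w ∈ F ∧ (u = w ∨ G.Adj w u) := by
    intro u
    have hu : u ∈ closedN G Dset := by rw [hDdom]; trivial
    rcases hu with hu | ⟨w, hw, hadj⟩
    · exact ⟨u, by rw [← hFcoe] at hu; exact_mod_cast hu, Or.inl rfl⟩
    · exact ⟨w, by rw [← hFcoe] at hw; exact_mod_cast hw, Or.inr hadj⟩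
  choose d hdF hdN using hdomfun
  set c : V → ℕ := fun v => (Finset.univ.filter (fun u => d u = v)).card with hc
  have hcsum : ∑ v ∈ F, c v = n := by
    rw [← hn, ← Finset.card_univ]
    exact (Finset.card_eq_sum_card_fiberwise (fun u _ => hdF u)).symm
  set m : ℕ := n / 3 with hm
  have hm3 : 3 * m ≤ n := by omega
  rcases le_or_gt F.card m with hsmall | hbig
  · -- The dominating set itself is small enough.
    refine ⟨Dset, ?_, ?_⟩
    · have h1 : Dset.ncard ≤ m := by
        rw [Set.ncard_eq_toFinset_card']
        have : Dset.toFinset = F := by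
          apply Finset.coe_injective; rw [hFcoe, Set.coe_toFinset]
        rw [this]; exact hsmall
      have h2 : (Dset.ncard : ℚ) ≤ (m : ℚ) := by exact_mod_cast h1
      have h3 : (3 : ℚ) * (m : ℚ) ≤ (n : ℚ) := by exact_mod_cast hm3
      linarith
    · rw [hDdom, Set.ncard_univ, Nat.card_eq_fintype_card, hn]
      have : (0 : ℚ) ≤ (n : ℚ) := by positivity
      linarith
  · -- Remove the k cheapest dominators.
    set k : ℕ := F.card - m with hk
    obtain ⟨T, hTsub, hTcard, hTmin⟩ := exists_bottom F c k (by omega)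
    set S : Set V := ((F \ T : Finset V) : Set V) with hS
    have hScard : S.ncard = m := by
      rw [hS, Set.ncard_coe_finset, Finset.card_sdiff_of_subset hTsub, hTcard]
      omega
    set L : ℕ := ∑ v ∈ T, c v with hL
    set R : ℕ := ∑ v ∈ F \ T, c v with hR
    have hLR : L + R = n := by
      rw [hL, hR, add_comm, Finset.sum_sdiff hTsub, hcsum]
    have hFT : (F \ T).card = m := by
      rw [Finset.card_sdiff_of_subset hTsub, hTcard]; omega
    have hm0 : 0 < m := by omega
    set q : ℕ := R / m with hq
    -- Each removed dominator has small fiber.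
    have hLkq : L ≤ k * q := by
      have hbound : ∀ v ∈ T, c v ≤ q := by
        intro v hv
        have h1 : (F \ T).card • c v ≤ ∑ w ∈ F \ T, c w :=
          Finset.card_nsmul_le_sum (F \ T) c (c v) (fun w hw => hTmin v hv w (Finset.mem_sdiff.1 hw).1 (Finset.mem_sdiff.1 hw).2)
        rw [hFT, smul_eq_mul] at h1
        rw [hq]
        exact (Nat.le_div_iff_mul_le hm0).2 (by rw [mul_comm]; exact h1)
      calc L ≤ T.card • q := Finset.sum_le_card_nsmul T c q hbound
        _ = k * q := by rw [hTcard, smul_eq_mul]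
    have hr : m * q ≤ R := Nat.mul_div_le R m
    have hD14 : 14 * (k + m) ≤ 5 * n := by
      have h1 : F.card ≤ 5 * n / 14 := hFcard ▸ hdom
      omega
    have harith : 14 * L ≤ n := pd_arith n m k q L R h28 hm hD14 hLR hr hLkq
    -- Coverage bound.
    set A : Finset V := Finset.univ.filter (fun u => d u ∉ T) with hA
    have hAsub : (A : Set V) ⊆ closedN G S := by
      intro u hu
      have hu' : d u ∉ T := by
        simp only [hA, Finset.coe_filter, Set.mem_setOf_eq, Finset.mem_univ, true_and] at hu
        exact hu
      have hdS : d u ∈ S := by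
        rw [hS]
        exact_mod_cast Finset.mem_sdiff.2 ⟨hdF u, hu'⟩
      rcases hdN u with h | h
      · exact Or.inl (h ▸ hdS)
      · exact Or.inr ⟨d u, hdS, h⟩
    have hAcard : n - L ≤ A.card := by
      set B : Finset V := Finset.univ.filter (fun u => d u ∈ T) with hB
      have hBcard : B.card = L := by
        rw [hL]
        rw [Finset.card_eq_sum_card_fiberwise
          (s := B) (f := d) (t := T) (fun u hu => (Finset.mem_filter.1 hu).2)]
        apply Finset.sum_congr rfl
        intro v hv
        rw [Finset.filter_filter]
        congr 1
        apply Finset.filter_congr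
        intro u _
        constructor
        · intro h; exact h.2
        · intro h; exact ⟨h ▸ hv, h⟩
      have hAB : A.card + B.card = n := by
        rw [hA, hB, ← hn, ← Finset.card_univ]
        rw [add_comm]
        exact Finset.card_filter_add_card_filter_not _
      omega
    have hcov : n - L ≤ (closedN G S).ncard := by
      calc n - L ≤ A.card := hAcard
        _ = ((A : Set V)).ncard := (Set.ncard_coe_finset A).symm
        _ ≤ (closedN G S).ncard := Set.ncard_le_ncard hAsub (Set.toFinite _)
    refine ⟨S, ?_, ?_⟩
    · have h2 : (S.ncard : ℚ) = (m : ℚ) := by rw [hScard]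
      have h3 : (3 : ℚ) * (m : ℚ) ≤ (n : ℚ) := by exact_mod_cast hm3
      rw [h2]; linarith
    · have h13 : 13 * n ≤ 14 * (closedN G S).ncard := by omega
      have h13' : (13 : ℚ) * n ≤ 14 * ((closedN G S).ncard : ℚ) := by exact_mod_cast h13
      linarith
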